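/- Let G and H be finite abelian groups with d = |G|, and suppose f : G → H is differentially 1-uniform. Then for every integer m ≥ 2|H| there exist m orthonormal bases B_0,…,B_{m−1} of ℂ^d, with B_a = {e^a_0,…,e^a_{d−1}}, and positive weights w_0,…,w_{m−1} with ∑_a w_a = 1/d, such that ∑_{a,b=0}^{m−1} w_a w_b ∑_{j,k=0}^{d−1} |⟨e^a_j, e^b_k⟩|^4 = 2/(d(d+1)); that is, there is a weighted 2-design in ℂP^{d−1} formed from the union of m orthonormal bases of ℂ^d. -/

import Mathlib

/-- A function `f : G → H` between additive groups is differentially 1-uniform if for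
every `(a, b) ≠ (0, 0)` the equation `f (x + a) - f x = b` has at most one solution. -/
def DiffOneUniform {G H : Type*} [AddGroup G] [AddGroup H] (f : G → H) : Prop :=
  ∀ a : G, ∀ b : H, ¬(a = 0 ∧ b = 0) →
    ∀ x y : G, f (x + a) - f x = b → f (y + a) - f y = b → x = y

namespace TwoDesignAux

open Finset

noncomputable section
variable {G H : Type*} [AddCommGroup G] [Fintype G] [AddCommGroup H] [Fintype H]

set_option linter.unusedSectionVars false

/-- Character-twisted Fourier basis vector. -/
def chB (f : G → H) (eG : Fin (Fintype.card G) ≃ G) (eX : Fin (Fintype.card G) ≃ AddChar G ℂ)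
    (ψ : AddChar H ℂ) (j : Fin (Fintype.card G)) : EuclideanSpace ℂ (Fin (Fintype.card G)) :=
  WithLp.toLp 2 (fun x => ((Real.sqrt (Fintype.card G) : ℂ))⁻¹ * (ψ (f (eG x)) * (eX j) (eG x)))

lemma mySum_addChar (χ : AddChar G ℂ) :
    ∑ x : G, χ x = if χ = 1 then (Fintype.card G : ℂ) else 0 := by
  classical
  rw [AddChar.sum_eq_ite]
  rfl

lemma inner_chB (f : G → H) (eG : Fin (Fintype.card G) ≃ G)
    (eX : Fin (Fintype.card G) ≃ AddChar G ℂ) (ψ ψ' : AddChar H ℂ)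
    (j k : Fin (Fintype.card G)) :
    (inner ℂ (chB f eG eX ψ j) (chB f eG eX ψ' k) : ℂ) =
      ((Fintype.card G : ℂ))⁻¹ *
        ∑ x : G, (ψ⁻¹ * ψ') (f x) * ((eX j)⁻¹ * (eX k)) x := by
  rw [PiLp.inner_apply, Finset.mul_sum,
    ← Equiv.sum_comp eG (fun x : G => (((Fintype.card G : ℂ))⁻¹ *
      ((ψ⁻¹ * ψ') (f x) * ((eX j)⁻¹ * (eX k)) x)))]
  · apply Finset.sum_congr rfl
    intro x _
    have hconj1 : (starRingEnd ℂ) (ψ (f (eG x))) = ψ⁻¹ (f (eG x)) := by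
      rw [AddChar.inv_apply', AddChar.inv_apply_eq_conj]
    have hconj2 : (starRingEnd ℂ) ((eX j) (eG x)) = (eX j)⁻¹ (eG x) := by
      rw [AddChar.inv_apply', AddChar.inv_apply_eq_conj]
    have h2 : ((Real.sqrt (Fintype.card G) : ℂ))⁻¹ * ((Real.sqrt (Fintype.card G) : ℂ))⁻¹
        = ((Fintype.card G : ℂ))⁻¹ := by
      rw [← mul_inv]
      norm_cast
      rw [Real.mul_self_sqrt (by positivity)]
      push_cast
      ring
    simp only [chB, PiLp.toLp_apply, RCLike.inner_apply, map_mul, map_inv₀, Complex.conj_ofReal, hconj1, hconj2,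
      AddChar.mul_apply]
    rw [← h2]
    ring

lemma orthonormal_chB (f : G → H) (eG : Fin (Fintype.card G) ≃ G)
    (eX : Fin (Fintype.card G) ≃ AddChar G ℂ) (ψ : AddChar H ℂ) :
    Orthonormal ℂ (chB f eG eX ψ) := by
  classical
  rw [orthonormal_iff_ite]
  intro j k
  rw [inner_chB]
  simp only [inv_mul_cancel, AddChar.one_apply, one_mul]
  rw [mySum_addChar]
  have hd : (Fintype.card G : ℂ) ≠ 0 := Nat.cast_ne_zero.2 Fintype.card_ne_zero
  by_cases h : j = k
  · subst h
    simp [inv_mul_cancel, hd]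
  · have : (eX j)⁻¹ * eX k ≠ 1 := by
      rw [Ne, inv_mul_eq_one]
      exact fun hc => h (eX.injective hc)
    simp [this, h]

lemma norm_chB_apply (f : G → H) (eG : Fin (Fintype.card G) ≃ G)
    (eX : Fin (Fintype.card G) ≃ AddChar G ℂ) (ψ : AddChar H ℂ)
    (j x : Fin (Fintype.card G)) :
    ‖chB f eG eX ψ j x‖ = (Real.sqrt (Fintype.card G))⁻¹ := by
  simp [chB, PiLp.toLp_apply, norm_mul, AddChar.norm_apply, abs_of_nonneg (Real.sqrt_nonneg _)]

lemma orthonormal_std :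
    Orthonormal ℂ (fun j : Fin (Fintype.card G) =>
      (EuclideanSpace.single j (1:ℂ) : EuclideanSpace ℂ (Fin (Fintype.card G)))) := by
  classical
  rw [orthonormal_iff_ite]
  intro j k
  rw [EuclideanSpace.inner_single_left]
  simp [EuclideanSpace.single_apply, eq_comm]

lemma pow4_sqrtinv (hd : 0 < Fintype.card G) :
    ((Real.sqrt (Fintype.card G))⁻¹) ^ 4 = ((Fintype.card G : ℝ) ^ 2)⁻¹ := by
  rw [inv_pow, show (4 : ℕ) = 2 * 2 from rfl, pow_mul, Real.sq_sqrt (by positivity)]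

lemma sum4_std_std :
    ∑ j : Fin (Fintype.card G), ∑ k : Fin (Fintype.card G),
      ‖(inner ℂ (EuclideanSpace.single j (1:ℂ) : EuclideanSpace ℂ (Fin (Fintype.card G)))
        (EuclideanSpace.single k (1:ℂ)) : ℂ)‖ ^ 4 = (Fintype.card G : ℝ) := by
  classical
  have : ∀ j k : Fin (Fintype.card G),
      ‖(inner ℂ (EuclideanSpace.single j (1:ℂ) : EuclideanSpace ℂ (Fin (Fintype.card G)))
        (EuclideanSpace.single k (1:ℂ)) : ℂ)‖ ^ 4 = if j = k then 1 else 0 := by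
    intro j k
    rw [EuclideanSpace.inner_single_left]
    simp only [map_one, one_mul, EuclideanSpace.single_apply]
    by_cases h : j = k <;> simp [h]
  simp only [this]
  simp [Finset.sum_ite_eq]

lemma sum4_std_chB (f : G → H) (eG : Fin (Fintype.card G) ≃ G)
    (eX : Fin (Fintype.card G) ≃ AddChar G ℂ) (ψ : AddChar H ℂ) :
    ∑ j : Fin (Fintype.card G), ∑ k : Fin (Fintype.card G),
      ‖(inner ℂ (EuclideanSpace.single j (1:ℂ) : EuclideanSpace ℂ (Fin (Fintype.card G)))
        (chB f eG eX ψ k) : ℂ)‖ ^ 4 = 1 := by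
  have hd : (0:ℝ) < Fintype.card G := by exact_mod_cast Fintype.card_pos
  have : ∀ j k : Fin (Fintype.card G),
      ‖(inner ℂ (EuclideanSpace.single j (1:ℂ) : EuclideanSpace ℂ (Fin (Fintype.card G)))
        (chB f eG eX ψ k) : ℂ)‖ ^ 4 = ((Fintype.card G : ℝ) ^ 2)⁻¹ := by
    intro j k
    rw [EuclideanSpace.inner_single_left]
    simp only [map_one, one_mul]
    rw [norm_chB_apply, pow4_sqrtinv Fintype.card_pos]
  simp only [this, Finset.sum_const, card_univ, Fintype.card_fin, nsmul_eq_mul]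
  field_simp

lemma sum4_chB_std (f : G → H) (eG : Fin (Fintype.card G) ≃ G)
    (eX : Fin (Fintype.card G) ≃ AddChar G ℂ) (ψ : AddChar H ℂ) :
    ∑ j : Fin (Fintype.card G), ∑ k : Fin (Fintype.card G),
      ‖(inner ℂ (chB f eG eX ψ j)
        (EuclideanSpace.single k (1:ℂ) : EuclideanSpace ℂ (Fin (Fintype.card G))) : ℂ)‖ ^ 4
        = 1 := by
  have : ∀ j k : Fin (Fintype.card G),
      ‖(inner ℂ (chB f eG eX ψ j)
        (EuclideanSpace.single k (1:ℂ) : EuclideanSpace ℂ (Fin (Fintype.card G))) : ℂ)‖ ^ 4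
        = ((Fintype.card G : ℝ) ^ 2)⁻¹ := by
    intro j k
    rw [EuclideanSpace.inner_single_right]
    simp only [one_mul]
    rw [RCLike.norm_conj, norm_chB_apply, pow4_sqrtinv Fintype.card_pos]
  have hd : (0:ℝ) < Fintype.card G := by exact_mod_cast Fintype.card_pos
  simp only [this, Finset.sum_const, card_univ, Fintype.card_fin, nsmul_eq_mul]
  field_simp

lemma count_lemma [DecidableEq G] [DecidableEq H] (f : G → H) (hf : DiffOneUniform f) :
    ∑ x : G, ∑ y : G, ∑ x' : G,
      (if f x - f y + f x' - f (x - y + x') = 0 then (1:ℂ) else 0)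
      = (Fintype.card G : ℂ)^2 + (Fintype.card G : ℂ) * ((Fintype.card G : ℂ) - 1) := by
  classical
  have step1 : ∑ x : G, ∑ y : G, ∑ x' : G,
      (if f x - f y + f x' - f (x - y + x') = 0 then (1:ℂ) else 0)
      = ∑ a : G, ∑ y : G, ∑ x' : G,
      (if f (y + a) - f y + f x' - f (x' + a) = 0 then (1:ℂ) else 0) := by
    rw [Finset.sum_comm]
    calc ∑ y : G, ∑ x : G, ∑ x' : G,
        (if f x - f y + f x' - f (x - y + x') = 0 then (1:ℂ) else 0)
        = ∑ y : G, ∑ a : G, ∑ x' : G,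
        (if f (y + a) - f y + f x' - f ((y + a) - y + x') = 0 then (1:ℂ) else 0) := by
          apply Finset.sum_congr rfl
          intro y _
          exact (Equiv.sum_comp (Equiv.addLeft y) (fun x : G => ∑ x' : G,
            (if f x - f y + f x' - f (x - y + x') = 0 then (1:ℂ) else 0))).symm
      _ = ∑ a : G, ∑ y : G, ∑ x' : G,
        (if f (y + a) - f y + f x' - f (x' + a) = 0 then (1:ℂ) else 0) := by
          rw [Finset.sum_comm]
          apply Finset.sum_congr rfl; intro a _
          apply Finset.sum_congr rfl; intro y _
          apply Finset.sum_congr rfl; intro x' _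
          congr 2
          abel_nf
  rw [step1]
  rw [← Finset.add_sum_erase _ _ (Finset.mem_univ (0:G))]
  have hzero : ∑ y : G, ∑ x' : G,
      (if f (y + 0) - f y + f x' - f (x' + 0) = 0 then (1:ℂ) else 0)
      = (Fintype.card G : ℂ)^2 := by
    have : ∀ y x' : G, (if f (y + 0) - f y + f x' - f (x' + 0) = 0 then (1:ℂ) else 0) = 1 := by
      intro y x'
      rw [if_pos]
      simp
    simp only [this, Finset.sum_const, card_univ, nsmul_eq_mul, mul_one]
    ring
  have hrest : ∀ a ∈ Finset.univ.erase (0:G), ∑ y : G, ∑ x' : G,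
      (if f (y + a) - f y + f x' - f (x' + a) = 0 then (1:ℂ) else 0)
      = (Fintype.card G : ℂ) := by
    intro a ha
    have ha0 : a ≠ 0 := Finset.ne_of_mem_erase ha
    have hcond : ∀ y x' : G,
        (f (y + a) - f y + f x' - f (x' + a) = 0) ↔ y = x' := by
      intro y x'
      constructor
      · intro hC
        have h' : f (y + a) - f y = f (x' + a) - f x' := by
          have h2 : f (y + a) - f y - (f (x' + a) - f x') = 0 := by
            rw [← hC]; abel
          exact sub_eq_zero.mp h2
        exact hf a (f (x' + a) - f x') (fun hc => ha0 hc.1) y x' h' rfl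
      · rintro rfl
        abel
    have : ∀ y x' : G, (if f (y + a) - f y + f x' - f (x' + a) = 0 then (1:ℂ) else 0)
        = if y = x' then (1:ℂ) else 0 := by
      intro y x'
      simp only [hcond]
    simp only [this]
    simp [Finset.sum_ite_eq, card_univ]
  rw [Finset.sum_congr rfl hrest, hzero, Finset.sum_const, Finset.card_erase_of_mem
    (Finset.mem_univ _), card_univ, nsmul_eq_mul]
  have h1 : (1:ℕ) ≤ Fintype.card G := Fintype.card_pos
  rw [Nat.cast_sub h1]
  push_cast
  ring

lemma swap_bc {α β γ : Type*} [Fintype α] [Fintype β] [Fintype γ]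
    (g : α → β → γ → ℂ) :
    ∑ a : α, ∑ b : β, ∑ c : γ, g a b c = ∑ a : α, ∑ c : γ, ∑ b : β, g a b c :=
  Finset.sum_congr rfl fun _ _ => Finset.sum_comm

lemma swap_cd {α β γ δ : Type*} [Fintype α] [Fintype β] [Fintype γ] [Fintype δ]
    (g : α → β → γ → δ → ℂ) :
    ∑ a : α, ∑ b : β, ∑ c : γ, ∑ d : δ, g a b c d
      = ∑ a : α, ∑ b : β, ∑ d : δ, ∑ c : γ, g a b c d :=
  Finset.sum_congr rfl fun _ _ => Finset.sum_congr rfl fun _ _ => Finset.sum_comm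

lemma norm4_eq (z : ℂ) : ((‖z‖ ^ 4 : ℝ) : ℂ) = (z * (starRingEnd ℂ) z) ^ 2 := by
  have h : ((‖z‖ ^ 2 : ℝ) : ℂ) = z * (starRingEnd ℂ) z := by
    rw [Complex.mul_conj]
    norm_cast
    rw [Complex.normSq_eq_norm_sq]
  calc ((‖z‖ ^ 4 : ℝ) : ℂ) = ((‖z‖ ^ 2 : ℝ) : ℂ) ^ 2 := by push_cast; ring
    _ = (z * (starRingEnd ℂ) z) ^ 2 := by rw [h]

lemma char_quad_sum (f : G → H) (hf : DiffOneUniform f) :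
    ∑ φ : AddChar H ℂ, ∑ μ : AddChar G ℂ,
      ‖∑ x : G, φ (f x) * μ x‖ ^ 4
    = (Fintype.card H : ℝ) * ((Fintype.card G : ℝ))^2 * (2 * (Fintype.card G : ℝ) - 1) := by
  classical
  have hcast := Complex.ofReal_injective
  apply hcast
  push_cast
  rw [show ∑ φ : AddChar H ℂ, ∑ μ : AddChar G ℂ, ((‖∑ x : G, φ (f x) * μ x‖:ℂ)) ^ 4
      = ∑ φ : AddChar H ℂ, ∑ μ : AddChar G ℂ,
        (((∑ x : G, φ (f x) * μ x) * (starRingEnd ℂ) (∑ x : G, φ (f x) * μ x)) ^ 2) from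
    Finset.sum_congr rfl fun φ _ => Finset.sum_congr rfl fun μ _ => by
      rw [← norm4_eq]; push_cast; ring]
  have hZZ : ∀ (φ : AddChar H ℂ) (μ : AddChar G ℂ),
      (∑ x : G, φ (f x) * μ x) * (starRingEnd ℂ) (∑ x : G, φ (f x) * μ x)
      = ∑ p : G × G, φ (f p.1 - f p.2) * μ (p.1 - p.2) := by
    intro φ μ
    rw [map_sum, Finset.sum_mul_sum, Fintype.sum_prod_type]
    apply Finset.sum_congr rfl
    intro x _
    apply Finset.sum_congr rfl
    intro y _
    rw [map_mul, ← AddChar.map_neg_eq_conj, ← AddChar.map_neg_eq_conj,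
      sub_eq_add_neg, sub_eq_add_neg, AddChar.map_add_eq_mul, AddChar.map_add_eq_mul]
    ring
  simp only [hZZ]
  have hsq : ∀ (φ : AddChar H ℂ) (μ : AddChar G ℂ),
      (∑ p : G × G, φ (f p.1 - f p.2) * μ (p.1 - p.2)) ^ 2
      = ∑ p : G × G, ∑ q : G × G,
          φ (f p.1 - f p.2 + (f q.1 - f q.2)) * μ (p.1 - p.2 + (q.1 - q.2)) := by
    intro φ μ
    rw [sq, Finset.sum_mul_sum]
    apply Finset.sum_congr rfl; intro p _
    apply Finset.sum_congr rfl; intro q _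
    rw [AddChar.map_add_eq_mul, AddChar.map_add_eq_mul]
    ring
  simp only [hsq]
  rw [swap_bc, Finset.sum_comm, swap_cd, swap_bc]
  have hfactor : ∀ p q : G × G,
      ∑ φ : AddChar H ℂ, ∑ μ : AddChar G ℂ,
        φ (f p.1 - f p.2 + (f q.1 - f q.2)) * μ (p.1 - p.2 + (q.1 - q.2))
      = (if f p.1 - f p.2 + (f q.1 - f q.2) = 0 then (Fintype.card H : ℂ) else 0)
        * (if p.1 - p.2 + (q.1 - q.2) = 0 then (Fintype.card G : ℂ) else 0) := by
    intro p q
    rw [← Finset.sum_mul_sum, AddChar.sum_apply_eq_ite, AddChar.sum_apply_eq_ite]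
  simp only [hfactor]
  have hinner : ∀ x y x' : G, ∑ y' : G,
      (if f x - f y + (f x' - f y') = 0 then (Fintype.card H : ℂ) else 0)
        * (if x - y + (x' - y') = 0 then (Fintype.card G : ℂ) else 0)
      = ((Fintype.card H : ℂ) * (Fintype.card G : ℂ))
          * (if f x - f y + f x' - f (x - y + x') = 0 then (1:ℂ) else 0) := by
    intro x y x'
    rw [Finset.sum_eq_single (x - y + x')]
    · have h2 : x - y + (x' - (x - y + x')) = 0 := by abel
      rw [if_pos h2]
      have heq : f x - f y + (f x' - f (x - y + x'))
          = f x - f y + f x' - f (x - y + x') := by abel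
      rw [heq]
      split_ifs with h1
      · ring
      · ring
    · intro b _ hb
      have : x - y + (x' - b) ≠ 0 := by
        intro hc
        apply hb
        have h3 : (x - y + x') - b = 0 := by rw [← hc]; abel
        exact (sub_eq_zero.mp h3).symm
      rw [if_neg this, mul_zero]
    · intro h
      exact absurd (Finset.mem_univ _) h
  have expand : ∑ p : G × G, ∑ q : G × G,
      (if f p.1 - f p.2 + (f q.1 - f q.2) = 0 then (Fintype.card H : ℂ) else 0)
        * (if p.1 - p.2 + (q.1 - q.2) = 0 then (Fintype.card G : ℂ) else 0)
      = ∑ x : G, ∑ y : G, ∑ x' : G, ∑ y' : G,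
      (if f x - f y + (f x' - f y') = 0 then (Fintype.card H : ℂ) else 0)
        * (if x - y + (x' - y') = 0 then (Fintype.card G : ℂ) else 0) := by
    rw [Fintype.sum_prod_type]
    apply Finset.sum_congr rfl; intro x _
    apply Finset.sum_congr rfl; intro y _
    rw [Fintype.sum_prod_type]
  rw [expand]
  simp only [hinner]
  simp only [← Finset.mul_sum]
  rw [count_lemma f hf]
  push_cast
  ring

lemma double_reindex {Γ : Type*} [Group Γ] [Fintype Γ] (F : Γ → ℝ) :
    ∑ g : Γ, ∑ g' : Γ, F (g⁻¹ * g') = (Fintype.card Γ : ℝ) * ∑ h : Γ, F h := by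
  have h1 : ∀ g : Γ, ∑ g' : Γ, F (g⁻¹ * g') = ∑ h : Γ, F h := by
    intro g
    exact (Fintype.sum_equiv (Equiv.mulLeft g) (fun h => F h)
      (fun x => F (g⁻¹ * x)) (fun h => by simp)).symm
  simp only [h1, Finset.sum_const, card_univ, nsmul_eq_mul]

lemma bigT (f : G → H) (hf : DiffOneUniform f) (eG : Fin (Fintype.card G) ≃ G)
    (eX : Fin (Fintype.card G) ≃ AddChar G ℂ) :
    ∑ ψ : AddChar H ℂ, ∑ ψ' : AddChar H ℂ,
      ∑ j : Fin (Fintype.card G), ∑ k : Fin (Fintype.card G),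
        ‖(inner ℂ (chB f eG eX ψ j) (chB f eG eX ψ' k) : ℂ)‖ ^ 4
    = (Fintype.card H : ℝ)^2 * (2 * (Fintype.card G : ℝ) - 1) / (Fintype.card G : ℝ) := by
  classical
  have hd0 : (0:ℝ) < Fintype.card G := by exact_mod_cast Fintype.card_pos
  set c : ℝ := ((Fintype.card G : ℝ)⁻¹)^4 with hc
  set F2 : AddChar H ℂ → AddChar G ℂ → ℝ :=
    fun φ μ => c * ‖∑ x : G, φ (f x) * μ x‖ ^ 4 with hF2
  have hterm : ∀ (ψ ψ' : AddChar H ℂ) (j k : Fin (Fintype.card G)),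
      ‖(inner ℂ (chB f eG eX ψ j) (chB f eG eX ψ' k) : ℂ)‖ ^ 4
        = F2 (ψ⁻¹ * ψ') ((eX j)⁻¹ * eX k) := by
    intro ψ ψ' j k
    rw [inner_chB, norm_mul, mul_pow, norm_inv, Complex.norm_natCast, hF2]
  simp only [hterm]
  have step2 : ∀ p : AddChar H ℂ,
      ∑ j : Fin (Fintype.card G), ∑ k : Fin (Fintype.card G), F2 p ((eX j)⁻¹ * eX k)
      = (Fintype.card G : ℝ) * ∑ μ : AddChar G ℂ, F2 p μ := by
    intro p
    rw [Equiv.sum_comp eX (fun χ => ∑ k : Fin (Fintype.card G), F2 p (χ⁻¹ * eX k))]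
    have : ∀ χ : AddChar G ℂ, ∑ k : Fin (Fintype.card G), F2 p (χ⁻¹ * eX k)
        = ∑ χ' : AddChar G ℂ, F2 p (χ⁻¹ * χ') := by
      intro χ
      exact Equiv.sum_comp eX (fun χ' => F2 p (χ⁻¹ * χ'))
    simp only [this]
    rw [double_reindex (fun μ => F2 p μ), AddChar.card_eq]
  have step2' : ∀ ψ ψ' : AddChar H ℂ,
      ∑ j : Fin (Fintype.card G), ∑ k : Fin (Fintype.card G), F2 (ψ⁻¹ * ψ') ((eX j)⁻¹ * eX k)
      = (Fintype.card G : ℝ) * ∑ μ : AddChar G ℂ, F2 (ψ⁻¹ * ψ') μ := fun ψ ψ' => step2 _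
  simp only [step2']
  rw [double_reindex (fun φ => (Fintype.card G : ℝ) * ∑ μ : AddChar G ℂ, F2 φ μ),
    AddChar.card_eq]
  simp only [hF2, ← Finset.mul_sum]
  rw [char_quad_sum f hf]
  rw [hc]
  field_simp


lemma sum_comp_fiber {m : ℕ} {J : Type*} [Fintype J] [DecidableEq J]
    (p : Fin m → J) (F : J → ℝ) :
    ∑ i : Fin m, F (p i)
      = ∑ o : J, (((Finset.univ.filter fun i => p i = o).card : ℕ) : ℝ) * F o := by
  rw [← Finset.sum_fiberwise' Finset.univ p F]
  exact Finset.sum_congr rfl fun o _ => by rw [Finset.sum_const, nsmul_eq_mul]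

lemma double_fiber {m : ℕ} {J : Type*} [Fintype J] (p : Fin m → J) (cR : J → ℝ)
    (key : ∀ F : J → ℝ, ∑ i : Fin m, F (p i) = ∑ o : J, cR o * F o)
    (hc0 : ∀ o, cR o ≠ 0) (Wt : J → ℝ) (SS : J → J → ℝ) :
    ∑ a : Fin m, ∑ b : Fin m,
        Wt (p a) / cR (p a) * (Wt (p b) / cR (p b)) * SS (p a) (p b)
      = ∑ o : J, ∑ o' : J, Wt o * Wt o' * SS o o' := by
  calc ∑ a : Fin m, ∑ b : Fin m,
        Wt (p a) / cR (p a) * (Wt (p b) / cR (p b)) * SS (p a) (p b)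
      = ∑ a : Fin m, ∑ o' : J, cR o' *
          (Wt (p a) / cR (p a) * (Wt o' / cR o' * SS (p a) o')) := by
        apply Finset.sum_congr rfl; intro a _
        rw [show (∑ b : Fin m, Wt (p a) / cR (p a) * (Wt (p b) / cR (p b)) * SS (p a) (p b))
            = ∑ b : Fin m, (fun o' => Wt (p a) / cR (p a) * (Wt o' / cR o' * SS (p a) o')) (p b)
          from Finset.sum_congr rfl fun b _ => by ring]
        exact key (fun o' => Wt (p a) / cR (p a) * (Wt o' / cR o' * SS (p a) o'))
    _ = ∑ o' : J, ∑ a : Fin m, cR o' *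
          (Wt (p a) / cR (p a) * (Wt o' / cR o' * SS (p a) o')) := Finset.sum_comm
    _ = ∑ o' : J, ∑ o : J, cR o * (cR o' * (Wt o / cR o * (Wt o' / cR o' * SS o o'))) := by
        apply Finset.sum_congr rfl; intro o' _
        rw [show (∑ a : Fin m, cR o' * (Wt (p a) / cR (p a) * (Wt o' / cR o' * SS (p a) o')))
            = ∑ a : Fin m, (fun o => cR o' * (Wt o / cR o * (Wt o' / cR o' * SS o o'))) (p a)
          from rfl]
        exact key (fun o => cR o' * (Wt o / cR o * (Wt o' / cR o' * SS o o')))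
    _ = ∑ o' : J, ∑ o : J, Wt o * Wt o' * SS o o' := by
        apply Finset.sum_congr rfl; intro o' _
        apply Finset.sum_congr rfl; intro o _
        field_simp [hc0 o, hc0 o']
    _ = ∑ o : J, ∑ o' : J, Wt o * Wt o' * SS o o' := Finset.sum_comm

lemma option_eval {K : Type*} [Fintype K] (u v dR : ℝ) (SS : Option K → Option K → ℝ)
    (h00 : SS none none = dR)
    (h0s : ∀ ψ, SS none (some ψ) = 1)
    (hs0 : ∀ ψ, SS (some ψ) none = 1)
    (hss : ∑ ψ : K, ∑ ψ' : K, SS (some ψ) (some ψ')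
      = (Fintype.card K : ℝ)^2 * (2 * dR - 1) / dR)
    (hdR : 0 < dR) (hNR : (0:ℝ) < Fintype.card K)
    (hu : u = (dR * (dR+1))⁻¹) (hv : v = ((Fintype.card K : ℝ) * (dR+1))⁻¹) :
    ∑ o : Option K, ∑ o' : Option K,
        (Option.elim o u fun _ => v) * (Option.elim o' u fun _ => v) * SS o o'
      = 2 / (dR * (dR + 1)) := by
  set NR : ℝ := (Fintype.card K : ℝ) with hNRdef
  rw [Fintype.sum_option]
  have hrow0 : ∑ o' : Option K,
      (Option.elim (none : Option K) u fun _ => v) * (Option.elim o' u fun _ => v)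
        * SS none o'
      = u * u * dR + NR * (u * v) := by
    rw [Fintype.sum_option]
    simp only [Option.elim, h00, h0s]
    rw [Finset.sum_const, card_univ, nsmul_eq_mul]
    ring
  have hrows : ∑ ψ : K, ∑ o' : Option K,
      (Option.elim (some ψ) u fun _ => v) * (Option.elim o' u fun _ => v) * SS (some ψ) o'
      = NR * (v * u) + v * v * (NR^2 * (2 * dR - 1) / dR) := by
    have hone : ∀ ψ : K, ∑ o' : Option K,
        (Option.elim (some ψ) u fun _ => v) * (Option.elim o' u fun _ => v) * SS (some ψ) o'
        = v * u + ∑ ψ' : K, v * v * SS (some ψ) (some ψ') := by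
      intro ψ
      rw [Fintype.sum_option]
      simp only [Option.elim, hs0]
      ring_nf
    simp only [hone]
    rw [Finset.sum_add_distrib, Finset.sum_const, card_univ, nsmul_eq_mul]
    have hpull : ∑ ψ : K, ∑ ψ' : K, v * v * SS (some ψ) (some ψ')
        = v * v * ∑ ψ : K, ∑ ψ' : K, SS (some ψ) (some ψ') := by
      rw [Finset.mul_sum]
      exact Finset.sum_congr rfl fun ψ _ => by rw [Finset.mul_sum]
    rw [hpull, hss]
  rw [hrow0, hrows, hu, hv]
  have h1 : dR ≠ 0 := ne_of_gt hdR
  have h2 : dR + 1 ≠ 0 := by linarith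
  have h3 : NR ≠ 0 := ne_of_gt hNR
  field_simp
  ring

end
end TwoDesignAux

/-- If there is a differentially 1-uniform function `f : G → H` with `d = |G|`, then for
every `m ≥ 2|H|` there is a weighted 2-design in `ℂP^{d-1}` formed from the union of `m`
orthonormal bases of `ℂ^d` (Welch-bound characterization). -/
theorem two_design_bases_of_diffOneUniform {G H : Type*}
    [AddCommGroup G] [Fintype G] [AddCommGroup H] [Fintype H]
    (f : G → H) (hf : DiffOneUniform f) :
    ∀ m : ℕ, 2 * Fintype.card H ≤ m →
      ∃ e : Fin m → Fin (Fintype.card G) → EuclideanSpace ℂ (Fin (Fintype.card G)),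
      ∃ w : Fin m → ℝ,
        (∀ a, Orthonormal ℂ (e a)) ∧ (∀ a, 0 < w a) ∧
        (∑ a, w a = ((Fintype.card G : ℝ))⁻¹) ∧
        ∑ a : Fin m, ∑ b : Fin m, w a * w b *
            ∑ j, ∑ k, ‖(inner ℂ (e a j) (e b k) : ℂ)‖ ^ 4 =
          2 / ((Fintype.card G : ℝ) * ((Fintype.card G : ℝ) + 1)) := by
  classical
  intro m hm
  open Finset TwoDesignAux in
  set d := Fintype.card G with hd
  set N := Fintype.card H with hN
  have hd1 : 0 < d := Fintype.card_pos
  have hN1 : 0 < N := Fintype.card_pos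
  have hm0 : 0 < m := lt_of_lt_of_le (by omega) hm
  have hdR : (0:ℝ) < d := by exact_mod_cast hd1
  have hNR : (0:ℝ) < N := by exact_mod_cast hN1
  obtain eG : Fin d ≃ G := (Fintype.equivFin G).symm
  obtain eX : Fin d ≃ AddChar G ℂ := (Fintype.equivFinOfCardEq (AddChar.card_eq)).symm
  obtain eH : Fin N ≃ AddChar H ℂ := (Fintype.equivFinOfCardEq (AddChar.card_eq)).symm
  -- merged family indexed by `Option (AddChar H ℂ)`
  set J := Option (AddChar H ℂ) with hJ
  set E : J → Fin d → EuclideanSpace ℂ (Fin d) := fun o =>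
    Option.elim o (fun j => EuclideanSpace.single j (1:ℂ)) (fun ψ => chB f eG eX ψ) with hE
  set u : ℝ := ((d:ℝ) * ((d:ℝ)+1))⁻¹ with hu
  set v : ℝ := ((N:ℝ) * ((d:ℝ)+1))⁻¹ with hv
  set Wt : J → ℝ := fun o => Option.elim o u (fun _ => v) with hWt
  set p : Fin m → J := fun i =>
    if i.1 = 0 then none else some (eH ⟨(i.1 - 1) % N, Nat.mod_lt _ hN1⟩) with hp
  set c : J → ℕ := fun o => (Finset.univ.filter fun i => p i = o).card with hcdef
  -- fibers are nonempty
  have hsurj : ∀ o : J, ∃ i : Fin m, p i = o := by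
    rintro (_ | ψ)
    · exact ⟨⟨0, hm0⟩, by simp [hp]⟩
    · refine ⟨⟨(eH.symm ψ).1 + 1, ?_⟩, ?_⟩
      · have : (eH.symm ψ).1 < N := (eH.symm ψ).2
        omega
      · have h1 : ((eH.symm ψ).1 + 1 : ℕ) ≠ 0 := by omega
        simp only [hp, h1, if_false]
        rw [Option.some_inj, Equiv.apply_eq_iff_eq_symm_apply, Fin.ext_iff]
        simp [Nat.mod_eq_of_lt (eH.symm ψ).2]
  have hcpos : ∀ o : J, 0 < c o := by
    intro o
    obtain ⟨i, hi⟩ := hsurj o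
    exact Finset.card_pos.2 ⟨i, Finset.mem_filter.2 ⟨Finset.mem_univ _, hi⟩⟩
  have hcR : ∀ o : J, (0:ℝ) < (c o : ℝ) := fun o => by exact_mod_cast hcpos o
  set w : Fin m → ℝ := fun i => Wt (p i) / (c (p i) : ℝ) with hw
  refine ⟨fun i => E (p i), w, ?_, ?_, ?_, ?_⟩
  · -- orthonormality
    intro a
    show Orthonormal ℂ (E (p a))
    rcases p a with _ | ψ
    · exact orthonormal_std
    · exact orthonormal_chB f eG eX ψ
  · -- positivity
    intro a
    show 0 < Wt (p a) / (c (p a) : ℝ)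
    apply div_pos _ (hcR _)
    rcases p a with _ | ψ
    · simp only [hWt, Option.elim, hu]
      positivity
    · simp only [hWt, Option.elim, hv]
      positivity
  · -- total weight
    have key : ∀ F : J → ℝ, ∑ i : Fin m, F (p i) = ∑ o : J, (c o : ℝ) * F o := by
      intro F
      rw [← Finset.sum_fiberwise' Finset.univ p F]
      apply Finset.sum_congr rfl
      intro o _
      rw [Finset.sum_const, nsmul_eq_mul]
    have hstep : ∑ a : Fin m, w a = ∑ o : J, (c o : ℝ) * (Wt o / (c o : ℝ)) :=
      key (fun o => Wt o / (c o : ℝ))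
    rw [hstep]
    have : ∀ o : J, (c o : ℝ) * (Wt o / (c o : ℝ)) = Wt o := by
      intro o
      rw [mul_comm, div_mul_cancel₀ _ (ne_of_gt (hcR o))]
    simp only [this]
    rw [Fintype.sum_option]
    simp only [hWt, Option.elim]
    rw [Finset.sum_const, card_univ, AddChar.card_eq, nsmul_eq_mul, hu, hv, ← hN]
    field_simp
    ring
  · -- the 2-design sum
    have key : ∀ F : J → ℝ, ∑ i : Fin m, F (p i) = ∑ o : J, (c o : ℝ) * F o :=
      fun F => sum_comp_fiber p F
    set SS : J → J → ℝ := fun o o' =>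
      ∑ j : Fin d, ∑ k : Fin d, ‖(inner ℂ (E o j) (E o' k) : ℂ)‖ ^ 4 with hSS
    have hcardK : (Fintype.card (AddChar H ℂ) : ℝ) = (N:ℝ) := by
      rw [AddChar.card_eq]
    have h00 : SS none none = (d:ℝ) := sum4_std_std
    have h0s : ∀ ψ : AddChar H ℂ, SS none (some ψ) = 1 := fun ψ => sum4_std_chB f eG eX ψ
    have hs0 : ∀ ψ : AddChar H ℂ, SS (some ψ) none = 1 := fun ψ => sum4_chB_std f eG eX ψ
    have hss : ∑ ψ : AddChar H ℂ, ∑ ψ' : AddChar H ℂ, SS (some ψ) (some ψ')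
        = (Fintype.card (AddChar H ℂ) : ℝ)^2 * (2 * (d:ℝ) - 1) / (d:ℝ) := by
      rw [hcardK]
      exact bigT f hf eG eX
    calc ∑ a : Fin m, ∑ b : Fin m, w a * w b *
            ∑ j, ∑ k, ‖(inner ℂ (E (p a) j) (E (p b) k) : ℂ)‖ ^ 4
        = ∑ a : Fin m, ∑ b : Fin m,
            Wt (p a) / (c (p a) : ℝ) * (Wt (p b) / (c (p b) : ℝ)) * SS (p a) (p b) := by
          apply Finset.sum_congr rfl; intro a _
          apply Finset.sum_congr rfl; intro b _
          rw [show w a * w b = Wt (p a) / (c (p a) : ℝ) * (Wt (p b) / (c (p b) : ℝ)) from rfl]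
      _ = ∑ o : J, ∑ o' : J, Wt o * Wt o' * SS o o' :=
          double_fiber p (fun o => (c o : ℝ)) key (fun o => ne_of_gt (hcR o)) Wt SS
      _ = 2 / ((d:ℝ) * ((d:ℝ) + 1)) := by
          refine option_eval u v (d:ℝ) SS h00 h0s hs0 hss hdR ?_ rfl ?_
          · rw [hcardK]; exact hNR
          · rw [hcardK]
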